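/- Let D be a strongly connected UDAF digraph with at least one edge, and let Refine(D) ⊆ ℤ^{V_D} be the monoid generated by the rows of the relator matrix Rel_D = Adj_D − I. For nonzero multisets M₁, M₂ ∈ ℕ^{V_D}, the following are equivalent: (i) M₁ ~_D M₂; (ii) (M₁ + Refine(D)) ∩ (M₂ + Refine(D)) ≠ ∅; (iii) M₂ − M₁ lies in the subgroup of ℤ^{V_D} generated by Refine(D). -/

import Mathlib

structure Digraph' where
  V : Type
  E : Type
  s : E → V
  t : E → V

structure DHom (D₁ D₂ : Digraph') where
  vMap : D₁.V → D₂.V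
  eMap : D₁.E → D₂.E
  hs : ∀ e, D₂.s (eMap e) = vMap (D₁.s e)
  ht : ∀ e, D₂.t (eMap e) = vMap (D₁.t e)

def BiWalk (D : Digraph') : Type :=
  { f : ℤ → D.E // ∀ i : ℤ, D.t (f i) = D.s (f (i + 1)) }

def biMap {D₁ D₂ : Digraph'} (φ : DHom D₁ D₂) (w : BiWalk D₁) : BiWalk D₂ :=
  ⟨fun i => φ.eMap (w.1 i), fun i => by rw [φ.ht, φ.hs, w.2 i]⟩

structure FwdWalk (D : Digraph') where
  ed : ℕ → D.E
  chain : ∀ i : ℕ, D.t (ed i) = D.s (ed (i + 1))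

structure BwdWalk (D : Digraph') where
  ed : ℕ → D.E
  chain : ∀ i : ℕ, D.t (ed (i + 1)) = D.s (ed i)

/-- UDAF digraph condition: for each vertex, the number of infinite forwards walks
from it and of infinite backwards walks to it are each `≠ 1`. -/
def IsUDAF (D : Digraph') : Prop :=
  (∀ v : D.V, ¬∃! p : FwdWalk D, D.s (p.ed 0) = v) ∧
  (∀ v : D.V, ¬∃! p : BwdWalk D, D.t (p.ed 0) = v)

/-- Edges lying on some bi-infinite walk. -/
def CoreE (D : Digraph') : Set D.E := {e | ∃ w : BiWalk D, ∃ i : ℤ, w.1 i = e}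

/-- Vertices lying on some bi-infinite walk. -/
def CoreV (D : Digraph') : Set D.V := {v | ∃ w : BiWalk D, ∃ i : ℤ, D.s (w.1 i) = v}

structure FinWalk (D : Digraph') where
  start : D.V
  ed : List D.E
  chain : List.Chain' (fun a b => D.t a = D.s b) ed
  hstart : ∀ e ∈ ed.head?, D.s e = start

def endVert (D : Digraph') (p : FinWalk D) : D.V :=
  p.ed.getLast?.elim p.start D.t

noncomputable def adjCount (D : Digraph') (v w : D.V) : ℕ :=
  Set.ncard {e : D.E | D.s e = v ∧ D.t e = w}

open Classical in
/-- Row `v` of the relator matrix `Adj_D − I`. -/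
noncomputable def relRow (D : Digraph') (v : D.V) : D.V → ℤ :=
  fun w => (adjCount D v w : ℤ) - (if v = w then 1 else 0)

open Classical in
/-- The congruence on `ℕ^{V_D}` generated by `v = Σ_w Adj_D(v,w)·w`. -/
noncomputable def dimConFull (D : Digraph') : AddCon (D.V → ℕ) :=
  addConGen (fun A B => ∃ v : D.V,
    A = (fun w => if w = v then 1 else 0) ∧ B = fun w => adjCount D v w)

def toInt {D : Digraph'} (M : D.V → ℕ) : D.V → ℤ := fun v => (M v : ℤ)

def StrongConn (D : Digraph') : Prop :=
  ∀ v w : D.V, ∃ p : FinWalk D, p.start = v ∧ endVert D p = w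

set_option linter.unusedSectionVars false

namespace Test
open Classical

variable {D : Digraph'}

noncomputable def dvec (D : Digraph') (v : D.V) : D.V → ℕ := fun w => if w = v then 1 else 0
noncomputable def arow (D : Digraph') (v : D.V) : D.V → ℕ := fun w => adjCount D v w

lemma con_base (v : D.V) : dimConFull D (dvec D v) (arow D v) :=
  AddConGen.Rel.of _ _ ⟨v, rfl, rfl⟩

lemma relRow_ge (v u : D.V) : -1 ≤ relRow D v u := by
  unfold relRow; have : (0:ℤ) ≤ (adjCount D v u : ℤ) := Int.natCast_nonneg _
  split <;> omega

lemma con_step (M : D.V → ℕ) (v : D.V) (h : 1 ≤ M v) :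
    ∃ N : D.V → ℕ, dimConFull D M N ∧ toInt N = toInt M + relRow D v := by
  refine ⟨fun w => M w + adjCount D v w - dvec D v w, ?_, ?_⟩
  · have h1 : M = (fun w => M w - dvec D v w) + dvec D v := by
      funext u; simp only [Pi.add_apply, dvec]; split
      · next hh => subst hh; omega
      · omega
    have h2 : (fun w => M w + adjCount D v w - dvec D v w)
        = (fun w => M w - dvec D v w) + arow D v := by
      funext u; simp only [Pi.add_apply, dvec, arow]; split
      · next hh => subst hh; omega
      · omega
    rw [h2]; nth_rewrite 1 [h1]
    exact (dimConFull D).add ((dimConFull D).refl _) (con_base v)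
  · funext u
    have hle : dvec D v u ≤ M u + adjCount D v u := by
      simp only [dvec]; split
      · next hh => subst hh; omega
      · omega
    simp only [toInt, Pi.add_apply, relRow, dvec] at *
    rw [Nat.cast_sub hle]
    push_cast
    by_cases hh : u = v
    · subst hh; simp; ring
    · simp [hh, Ne.symm hh]

lemma con_applyList (l : List D.V) (m : ℕ) :
    ∀ (M : D.V → ℕ), (∀ u, l.length + m ≤ M u) →
    ∃ N, dimConFull D M N ∧ toInt N = toInt M + (l.map (relRow D)).sum ∧ ∀ u, m ≤ N u := by
  induction l with
  | nil =>
    intro M h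
    exact ⟨M, (dimConFull D).refl M, by simp, fun u => by have := h u; simpa using this⟩
  | cons v l ih =>
    intro M h
    obtain ⟨N₁, h1, h2⟩ := con_step M v (by have := h v; simp at this; omega)
    have hN₁ : ∀ u, l.length + m ≤ N₁ u := by
      intro u
      have h3 := congrFun h2 u
      have h4 := relRow_ge v u
      have h5 := h u
      simp only [toInt, Pi.add_apply, List.length_cons] at h3 h5
      omega
    obtain ⟨N, hN, hNe, hNc⟩ := ih N₁ hN₁
    refine ⟨N, (dimConFull D).trans h1 hN, ?_, hNc⟩
    rw [hNe, h2]; simp only [List.map_cons, List.sum_cons]; ring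

lemma mem_refM_iff {R : D.V → ℤ} :
    R ∈ AddSubmonoid.closure (Set.range (relRow D)) ↔
      ∃ l : List D.V, R = (l.map (relRow D)).sum := by
  constructor
  · intro h
    induction h using AddSubmonoid.closure_induction with
    | mem x hx => obtain ⟨v, rfl⟩ := hx; exact ⟨[v], by simp⟩
    | zero => exact ⟨[], by simp⟩
    | add x y _ _ ihx ihy =>
      obtain ⟨lx, rfl⟩ := ihx; obtain ⟨ly, rfl⟩ := ihy
      exact ⟨lx ++ ly, by simp⟩
  · rintro ⟨l, rfl⟩
    exact list_sum_mem (by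
      intro x hx
      simp only [List.mem_map] at hx
      obtain ⟨v, _, rfl⟩ := hx
      exact AddSubmonoid.subset_closure ⟨v, rfl⟩)

section WithFin
variable [Fintype D.V] [Fintype D.E]

lemma adjCount_pos {e : D.E} {v w : D.V} (hs : D.s e = v) (ht : D.t e = w) :
    1 ≤ adjCount D v w := by
  have : (0:ℕ) < adjCount D v w := by
    rw [adjCount, Set.ncard_pos (Set.toFinite _)]
    exact ⟨e, hs, ht⟩
  omega

lemma adjCount_two {e₁ e₂ : D.E} {v w : D.V} (hne : e₁ ≠ e₂)
    (hs₁ : D.s e₁ = v) (ht₁ : D.t e₁ = w) (hs₂ : D.s e₂ = v) (ht₂ : D.t e₂ = w) :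
    2 ≤ adjCount D v w := by
  have : 1 < adjCount D v w := by
    rw [adjCount, Set.one_lt_ncard_iff (Set.toFinite _)]
    exact ⟨e₁, e₂, ⟨hs₁, ht₁⟩, ⟨hs₂, ht₂⟩, hne⟩
  omega

end WithFin

section Walks
variable [Fintype D.V] [Fintype D.E]

lemma exists_out (hsc : StrongConn D) (he : Nonempty D.E) (v : D.V) :
    ∃ e : D.E, D.s e = v := by
  obtain ⟨e₀⟩ := he
  obtain ⟨p, hp1, hp2⟩ := hsc v (D.s e₀)
  match he : p.ed with
  | [] =>
    refine ⟨e₀, ?_⟩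
    have h3 : endVert D p = p.start := by simp [endVert, he]
    rw [h3, hp1] at hp2
    exact hp2.symm
  | e :: es =>
    exact ⟨e, by rw [p.hstart e (by simp [he]), hp1]⟩

end Walks

section Walks2
variable [Fintype D.V] [Fintype D.E]

noncomputable def nextE (hsc : StrongConn D) (he : Nonempty D.E) (v : D.V) : D.E :=
  (exists_out hsc he v).choose

lemma nextE_s (hsc : StrongConn D) (he : Nonempty D.E) (v : D.V) :
    D.s (nextE hsc he v) = v := (exists_out hsc he v).choose_spec

lemma exists_fwdWalk (hsc : StrongConn D) (he : Nonempty D.E) (v : D.V) :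
    ∃ p : FwdWalk D, D.s (p.ed 0) = v := by
  refine ⟨⟨fun n => Nat.rec (nextE hsc he v) (fun _ e => nextE hsc he (D.t e)) n,
    fun i => ?_⟩, nextE_s hsc he v⟩
  exact (nextE_s hsc he _).symm

lemma exists_split (hU : IsUDAF D) (hsc : StrongConn D) (he : Nonempty D.E) :
    ∃ (v : D.V) (e₁ e₂ : D.E), e₁ ≠ e₂ ∧ D.s e₁ = v ∧ D.s e₂ = v := by
  obtain ⟨e₀⟩ := he
  set v₀ := D.s e₀ with hv₀
  obtain ⟨p, hp⟩ := exists_fwdWalk hsc ⟨e₀⟩ v₀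
  have hq : ∃ q : FwdWalk D, D.s (q.ed 0) = v₀ ∧ q ≠ p := by
    by_contra hcon
    push_neg at hcon
    exact hU.1 v₀ ⟨p, hp, fun q hq => hcon q hq⟩
  obtain ⟨q, hq1, hq2⟩ := hq
  have hed : ∃ i, p.ed i ≠ q.ed i := by
    by_contra hcon
    push_neg at hcon
    apply hq2
    cases p; cases q
    congr 1
    exact funext fun i => (hcon i).symm
  classical
  let k := Nat.find hed
  have hk : p.ed k ≠ q.ed k := Nat.find_spec hed
  have hs : D.s (p.ed k) = D.s (q.ed k) := by
    match hk2 : k with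
    | 0 => rw [hp, hq1]
    | m + 1 =>
      have hm : p.ed m = q.ed m := by
        by_contra hcon
        exact Nat.find_min hed (by omega : m < k) hcon
      rw [← p.chain m, ← q.chain m, hm]
  exact ⟨D.s (p.ed k), p.ed k, q.ed k, hk, rfl, hs.symm⟩

lemma outdeg_two (hU : IsUDAF D) (hsc : StrongConn D) (he : Nonempty D.E) :
    ∃ v : D.V, 2 ≤ ∑ w, adjCount D v w := by
  obtain ⟨v, e₁, e₂, hne, hs₁, hs₂⟩ := exists_split hU hsc he
  refine ⟨v, ?_⟩
  by_cases ht : D.t e₁ = D.t e₂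
  · have h2 : 2 ≤ adjCount D v (D.t e₁) := adjCount_two hne hs₁ rfl hs₂ ht.symm
    calc 2 ≤ adjCount D v (D.t e₁) := h2
    _ ≤ ∑ w, adjCount D v w :=
      Finset.single_le_sum (fun w _ => Nat.zero_le _) (Finset.mem_univ _)
  · have h1 : 1 ≤ adjCount D v (D.t e₁) := adjCount_pos hs₁ rfl
    have h2 : 1 ≤ adjCount D v (D.t e₂) := adjCount_pos hs₂ rfl
    calc 2 ≤ adjCount D v (D.t e₁) + adjCount D v (D.t e₂) := by omega
    _ = ∑ w ∈ ({D.t e₁, D.t e₂} : Finset D.V), adjCount D v w :=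
      (Finset.sum_pair ht).symm
    _ ≤ ∑ w, adjCount D v w :=
      Finset.sum_le_sum_of_subset (Finset.subset_univ _)

end Walks2

def endO (D : Digraph') : D.V → List D.E → D.V
  | v, [] => v
  | _, e :: es => endO D (D.t e) es

lemma endO_ne_nil : ∀ (es : List D.E) (hne : es ≠ []) (v : D.V),
    endO D v es = D.t (es.getLast hne) := by
  intro es
  induction es with
  | nil => intro h; exact absurd rfl h
  | cons e es ih =>
    intro _ v
    match es with
    | [] => rfl
    | e' :: es' =>
      show endO D (D.t e) (e' :: es') = _
      rw [ih (by simp) (D.t e)]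
      rfl

lemma endO_endVert (p : FinWalk D) : endO D p.start p.ed = endVert D p := by
  match h : p.ed with
  | [] => simp [endO, endVert, h]
  | e :: es =>
    rw [endO_ne_nil (e :: es) (by simp) p.start, endVert, h,
      List.getLast?_eq_getLast (by simp : e :: es ≠ [])]
    rfl

section Transfer
variable [Fintype D.V] [Fintype D.E]

lemma refM_step (v : D.V) {M N : D.V → ℕ} (h : toInt N = toInt M + relRow D v) :
    toInt N - toInt M ∈ AddSubmonoid.closure (Set.range (relRow D)) := by
  have : toInt N - toInt M = relRow D v := by rw [h]; ring
  rw [this]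
  exact AddSubmonoid.subset_closure ⟨v, rfl⟩

lemma con_transfer_aux (es : List D.E) :
    ∀ (v : D.V), List.Chain' (fun a b => D.t a = D.s b) es →
    (∀ e ∈ es.head?, D.s e = v) → ∀ (M : D.V → ℕ), 1 ≤ M v →
    ∃ N, dimConFull D M N ∧
      (∀ u, (M u : ℤ) - dvec D v u + dvec D (endO D v es) u ≤ (N u : ℤ)) ∧
      toInt N - toInt M ∈ AddSubmonoid.closure (Set.range (relRow D)) := by
  induction es with
  | nil =>
    intro v _ _ M hM
    refine ⟨M, (dimConFull D).refl M, fun u => ?_, by simpa using zero_mem _⟩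
    have h0 : endO D v [] = v := rfl
    rw [h0]
    omega
  | cons e es ih =>
    intro v hch hhd M hM
    have hse : D.s e = v := hhd e rfl
    obtain ⟨N₁, h1, h2⟩ := con_step M v hM
    have hadj : 1 ≤ adjCount D v (D.t e) := adjCount_pos hse rfl
    have hN₁ : ∀ u, (N₁ u : ℤ) = (M u : ℤ) + adjCount D v u - (if v = u then 1 else 0) := by
      intro u
      have := congrFun h2 u
      simp only [toInt, Pi.add_apply, relRow] at this
      omega
    have hstep : ∀ u, (M u : ℤ) - dvec D v u + dvec D (D.t e) u ≤ (N₁ u : ℤ) := by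
      intro u
      have hac : ((dvec D v u : ℕ) : ℤ) = (if v = u then 1 else 0) := by
        simp only [dvec]
        by_cases h : u = v
        · simp [h]
        · simp [h]
          exact fun (hh : v = u) => h hh.symm
      have hb : ((dvec D (D.t e) u : ℕ) : ℤ) ≤ (adjCount D v u : ℤ) := by
        simp only [dvec]
        split
        · next hh => subst hh; exact_mod_cast hadj
        · simp
      rw [hN₁ u]
      omega
    have hN₁pos : 1 ≤ N₁ (D.t e) := by
      have h5 := hstep (D.t e)
      have h6 : dvec D (D.t e) (D.t e) = 1 := by simp [dvec]
      have h7 : dvec D v (D.t e) ≤ M (D.t e) := by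
        simp only [dvec]
        split
        · next hh => rw [hh]; exact hM
        · omega
      omega
    have hch' : List.Chain' (fun a b => D.t a = D.s b) es := hch.tail
    have hhd' : ∀ e' ∈ es.head?, D.s e' = D.t e := by
      intro e' he'
      exact (List.isChain_cons.mp hch).1 e' he' |>.symm
    obtain ⟨N, hN, hNineq, hNmem⟩ := ih (D.t e) hch' hhd' N₁ hN₁pos
    refine ⟨N, (dimConFull D).trans h1 hN, ?_, ?_⟩
    · intro u
      have ha := hstep u
      have hb := hNineq u
      show (M u : ℤ) - dvec D v u + dvec D (endO D (D.t e) es) u ≤ (N u : ℤ)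
      omega
    · have := AddSubmonoid.add_mem _ hNmem (refM_step v h2)
      simpa [sub_add_sub_cancel] using this

end Transfer

section Pump
variable [Fintype D.V] [Fintype D.E]

lemma con_transfer (hsc : StrongConn D) (v w : D.V) (M : D.V → ℕ) (hM : 1 ≤ M v) :
    ∃ N, dimConFull D M N ∧
      (∀ u, (M u : ℤ) - dvec D v u + dvec D w u ≤ (N u : ℤ)) ∧
      toInt N - toInt M ∈ AddSubmonoid.closure (Set.range (relRow D)) := by
  obtain ⟨p, hp1, hp2⟩ := hsc v w
  have hend : endO D v p.ed = w := by
    rw [← hp1]; rw [endO_endVert p, hp2]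
  have hhd : ∀ e ∈ p.ed.head?, D.s e = v := by
    intro e he; rw [p.hstart e he, hp1]
  obtain ⟨N, h1, h2, h3⟩ := con_transfer_aux p.ed v p.chain hhd M hM
  exact ⟨N, h1, by rw [← hend]; exact h2, h3⟩

lemma con_multi (hsc : StrongConn D) (k : ℕ) (v w : D.V) :
    ∀ (M : D.V → ℕ), k ≤ M v →
    ∃ N, dimConFull D M N ∧
      (∀ u, (M u : ℤ) - k * dvec D v u + k * dvec D w u ≤ (N u : ℤ)) ∧
      toInt N - toInt M ∈ AddSubmonoid.closure (Set.range (relRow D)) := by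
  induction k with
  | zero =>
    intro M _
    exact ⟨M, (dimConFull D).refl M, fun u => by simp, by simpa using zero_mem _⟩
  | succ k ih =>
    intro M hM
    obtain ⟨N₁, h1, h2, h3⟩ := con_transfer hsc v w M (by omega)
    have hN₁v : k ≤ N₁ v := by
      have := h2 v
      have hd : dvec D v v = 1 := by simp [dvec]
      have hd2 : (0:ℤ) ≤ dvec D w v := by positivity
      omega
    obtain ⟨N, hc1, hc2, hc3⟩ := ih N₁ hN₁v
    refine ⟨N, (dimConFull D).trans h1 hc1, ?_, ?_⟩
    · intro u
      have ha := h2 u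
      have hb := hc2 u
      push_cast
      nlinarith [ha, hb]
    · have := AddSubmonoid.add_mem _ hc3 h3
      simpa [sub_add_sub_cancel] using this

lemma con_spread (hsc : StrongConn D) (n : ℕ) (l : List D.V) :
    ∀ (v : D.V) (M : D.V → ℕ), n * l.length + n ≤ M v →
    ∃ N, dimConFull D M N ∧ (∀ w ∈ l, n ≤ N w) ∧ n ≤ N v ∧
      (∀ u, u ≠ v → M u ≤ N u) ∧
      toInt N - toInt M ∈ AddSubmonoid.closure (Set.range (relRow D)) := by
  induction l with
  | nil =>
    intro v M hM
    refine ⟨M, (dimConFull D).refl M, by simp, by simp at hM; omega,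
      fun u _ => le_refl _, by simpa using zero_mem _⟩
  | cons w l ih =>
    intro v M hM
    simp only [List.length_cons] at hM
    obtain ⟨N₁, h1, h2, h3⟩ := con_multi hsc n v w M (by nlinarith)
    have hvd : dvec D v v = 1 := by simp [dvec]
    have hwd : dvec D w w = 1 := by simp [dvec]
    have hN₁v : n * l.length + n ≤ N₁ v := by
      have h5 := h2 v
      rw [hvd] at h5
      have hd2 : (0:ℤ) ≤ (dvec D w v : ℤ) := by positivity
      push_cast at h5 ⊢
      nlinarith
    have hmono₁ : ∀ u, u ≠ v → M u ≤ N₁ u := by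
      intro u hu
      have h5 := h2 u
      have hd0 : dvec D v u = 0 := by simp only [dvec]; exact if_neg hu
      have hd2 : (0:ℤ) ≤ (dvec D w u : ℤ) := by positivity
      rw [hd0] at h5
      push_cast at h5
      have : (M u : ℤ) ≤ (N₁ u : ℤ) := by nlinarith
      exact_mod_cast this
    have hN₁w : n ≤ N₁ w := by
      have h5 := h2 w
      rw [hwd] at h5
      by_cases hh : w = v
      · subst hh
        rw [hwd] at h5
        push_cast at h5 ⊢
        nlinarith
      · have hd0 : dvec D v w = 0 := by simp only [dvec]; exact if_neg hh
        rw [hd0] at h5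
        push_cast at h5 ⊢
        nlinarith
    obtain ⟨N, hc1, hc2, hc3, hcm, hc4⟩ := ih v N₁ hN₁v
    refine ⟨N, (dimConFull D).trans h1 hc1, ?_, hc3, ?_, ?_⟩
    · intro w' hw'
      rcases List.mem_cons.mp hw' with hh | hh
      · subst hh
        by_cases hh2 : w' = v
        · subst hh2; exact hc3
        · exact le_trans hN₁w (hcm w' hh2)
      · exact hc2 w' hh
    · intro u hu
      exact le_trans (hmono₁ u hu) (hcm u hu)
    · have := AddSubmonoid.add_mem _ hc4 h3
      simpa [sub_add_sub_cancel] using this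

end Pump

section Pump2
variable [Fintype D.V] [Fintype D.E]

lemma sum_dvec (v : D.V) : ∑ u, dvec D v u = 1 := by
  simp only [dvec]
  rw [Finset.sum_ite_eq' Finset.univ v (fun _ => 1)]
  simp

lemma exists_pos {M : D.V → ℕ} (hM : M ≠ 0) : ∃ v, 1 ≤ M v := by
  by_contra h
  push_neg at h
  refine hM (funext fun v => ?_)
  have h2 : M v = 0 := by have := h v; omega
  simpa using h2

lemma con_grow (hU : IsUDAF D) (hsc : StrongConn D) (he : Nonempty D.E)
    (M : D.V → ℕ) (hM : M ≠ 0) :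
    ∃ N, dimConFull D M N ∧ (∑ u, M u) + 1 ≤ ∑ u, N u ∧
      toInt N - toInt M ∈ AddSubmonoid.closure (Set.range (relRow D)) := by
  obtain ⟨v₁, hv₁⟩ := exists_pos hM
  obtain ⟨vs, hvs⟩ := outdeg_two hU hsc he
  obtain ⟨N₁, h1, h2, h3⟩ := con_transfer hsc v₁ vs M hv₁
  have hsum₁ : ∑ u, M u ≤ ∑ u, N₁ u := by
    have hZ : (∑ u, (M u:ℤ)) - 1 + 1 ≤ ∑ u, (N₁ u : ℤ) := by
      calc (∑ u, (M u:ℤ)) - 1 + 1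
          = ∑ u, ((M u:ℤ) - dvec D v₁ u + dvec D vs u) := by
            rw [Finset.sum_add_distrib, Finset.sum_sub_distrib]
            have e1 : ∑ u, ((dvec D v₁ u : ℕ):ℤ) = 1 := by
              rw [← Nat.cast_sum, sum_dvec]; rfl
            have e2 : ∑ u, ((dvec D vs u : ℕ):ℤ) = 1 := by
              rw [← Nat.cast_sum, sum_dvec]; rfl
            rw [e1, e2]
        _ ≤ ∑ u, (N₁ u : ℤ) := Finset.sum_le_sum (fun u _ => h2 u)
    have := hZ
    push_cast at this
    exact_mod_cast by linarith [this]
  have hN₁vs : 1 ≤ N₁ vs := by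
    have h5 := h2 vs
    have hd : dvec D vs vs = 1 := by simp [dvec]
    rw [hd] at h5
    have hd2 : dvec D v₁ vs ≤ M vs := by
      simp only [dvec]
      split
      · next hh => rw [hh]; exact hv₁
      · omega
    omega
  obtain ⟨N₂, hc1, hc2⟩ := con_step N₁ vs hN₁vs
  have hsum₂ : (∑ u, N₁ u) + 1 ≤ ∑ u, N₂ u := by
    have hZ : ∑ u, (N₂ u : ℤ) = ∑ u, (N₁ u:ℤ) + ∑ u, (adjCount D vs u : ℤ) - 1 := by
      have : ∀ u, (N₂ u : ℤ) = (N₁ u:ℤ) + ((adjCount D vs u:ℤ) - (if vs = u then 1 else 0)) := by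
        intro u; have := congrFun hc2 u
        simpa [toInt, relRow] using this
      rw [Finset.sum_congr rfl (fun u _ => this u)]
      rw [Finset.sum_add_distrib, Finset.sum_sub_distrib]
      have e1 : ∑ u, (if vs = u then (1:ℤ) else 0) = 1 := by
        rw [Finset.sum_ite_eq Finset.univ vs (fun _ => 1)]
        simp
      rw [e1]
      ring
    have hA : (2:ℤ) ≤ ∑ u, (adjCount D vs u : ℤ) := by exact_mod_cast hvs
    have : (∑ u, (N₁ u:ℤ)) + 1 ≤ ∑ u, (N₂ u : ℤ) := by omega
    exact_mod_cast this
  refine ⟨N₂, (dimConFull D).trans h1 hc1, by omega, ?_⟩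
  have := AddSubmonoid.add_mem _ (refM_step vs hc2) h3
  simpa [sub_add_sub_cancel] using this

lemma con_grow_many (hU : IsUDAF D) (hsc : StrongConn D) (he : Nonempty D.E) (t : ℕ) :
    ∀ (M : D.V → ℕ), M ≠ 0 →
    ∃ N, dimConFull D M N ∧ (∑ u, M u) + t ≤ ∑ u, N u ∧
      toInt N - toInt M ∈ AddSubmonoid.closure (Set.range (relRow D)) := by
  induction t with
  | zero =>
    intro M _
    exact ⟨M, (dimConFull D).refl M, by omega, by simpa using zero_mem _⟩
  | succ t ih =>
    intro M hM
    obtain ⟨N₁, h1, h2, h3⟩ := con_grow hU hsc he M hM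
    have hN₁ : N₁ ≠ 0 := by
      intro hc
      rw [hc] at h2
      simp at h2
    obtain ⟨N, hc1, hc2, hc3⟩ := ih N₁ hN₁
    refine ⟨N, (dimConFull D).trans h1 hc1, by omega, ?_⟩
    have := AddSubmonoid.add_mem _ hc3 h3
    simpa [sub_add_sub_cancel] using this

lemma con_pump (hU : IsUDAF D) (hsc : StrongConn D) (he : Nonempty D.E)
    (M : D.V → ℕ) (hM : M ≠ 0) (n : ℕ) :
    ∃ N, dimConFull D M N ∧ (∀ u, n ≤ N u) ∧
      toInt N - toInt M ∈ AddSubmonoid.closure (Set.range (relRow D)) := by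
  have hVne : Nonempty D.V := ⟨D.s he.some⟩
  set c := Fintype.card D.V with hc
  have hc1 : 1 ≤ c := Fintype.card_pos
  set K := (n+1) * c + (n+1) with hK
  obtain ⟨M₁, h1, h2, h3⟩ := con_grow_many hU hsc he (K * c) M hM
  have hex : ∃ v, K ≤ M₁ v := by
    by_contra h
    push_neg at h
    have hsum : (∑ u, M₁ u) + c ≤ c * K := by
      have h5 : ∑ u, (M₁ u + 1) ≤ ∑ _u : D.V, K :=
        Finset.sum_le_sum (fun u _ => by have := h u; omega)
      rw [Finset.sum_add_distrib, Finset.sum_const, Finset.sum_const,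
        Finset.card_univ, smul_eq_mul, smul_eq_mul, mul_one] at h5
      rw [← hc] at h5
      omega
    have hKc : K * c ≤ ∑ u, M₁ u := by omega
    have := Nat.mul_comm K c
    omega
  obtain ⟨v, hv⟩ := hex
  have hlen : (Finset.univ : Finset D.V).toList.length = c := Finset.length_toList _
  obtain ⟨N, hc1', hc2, hc3, _, hc5⟩ := con_spread hsc (n+1) (Finset.univ : Finset D.V).toList v M₁
    (by rw [hlen]; exact hv)
  refine ⟨N, (dimConFull D).trans h1 hc1', ?_, ?_⟩
  · intro u
    have := hc2 u (Finset.mem_toList.mpr (Finset.mem_univ u))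
    omega
  · have := AddSubmonoid.add_mem _ hc5 h3
    simpa [sub_add_sub_cancel] using this

end Pump2

section Key
variable [Fintype D.V] [Fintype D.E]

lemma dvec_le_one (v u : D.V) : dvec D v u ≤ 1 := by
  simp only [dvec]; split <;> omega

lemma con_add_of_dvec (w : D.V) (X : D.V → ℕ) (hX : ∀ u, 1 ≤ X u) (T : D.V → ℕ)
    (hT : dimConFull D (dvec D w) (dvec D w + T)) : dimConFull D X (X + T) := by
  have hX' : X = dvec D w + (fun u => X u - dvec D w u) := by
    funext u
    have := hX u; have := dvec_le_one (D := D) w u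
    simp only [Pi.add_apply]; omega
  have hcon := (dimConFull D).add hT ((dimConFull D).refl (fun u => X u - dvec D w u))
  have he2 : (dvec D w + T) + (fun u => X u - dvec D w u) = X + T := by
    funext u
    have := hX u; have := dvec_le_one (D := D) w u
    simp only [Pi.add_apply]; omega
  rw [he2] at hcon
  rw [← hX'] at hcon
  exact hcon

lemma exists_S0 (hU : IsUDAF D) (hsc : StrongConn D) (he : Nonempty D.E) :
    ∃ S₀ : D.V → ℕ, (∀ u, 1 ≤ S₀ u) ∧
      ∀ v, dimConFull D (dvec D v) (dvec D v + S₀) := by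
  have hpump : ∀ v : D.V, ∃ S : D.V → ℕ, (∀ u, 1 ≤ S u) ∧
      dimConFull D (dvec D v) (dvec D v + S) := by
    intro v
    obtain ⟨N, h1, h2, _⟩ := con_pump hU hsc he (dvec D v)
      (by intro hc; have := congrFun hc v; simp [dvec] at this) 2
    refine ⟨fun u => N u - dvec D v u, fun u => ?_, ?_⟩
    · show 1 ≤ N u - dvec D v u
      have := h2 u; have := dvec_le_one (D := D) v u; omega
    · have hNe : dvec D v + (fun u => N u - dvec D v u) = N := by
        funext u
        have := h2 u; have := dvec_le_one (D := D) v u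
        simp only [Pi.add_apply]; omega
      rw [hNe]; exact h1
  choose S hS1 hS2 using hpump
  have haux : ∀ (t : Finset D.V) (X : D.V → ℕ), (∀ u, 1 ≤ X u) →
      dimConFull D X (X + ∑ w ∈ t, S w) := by
    intro t
    induction t using Finset.induction_on with
    | empty => intro X hX; simpa using (dimConFull D).refl X
    | @insert a s hni ih =>
      intro X hX
      rw [Finset.sum_insert hni]
      have h1 : dimConFull D X (X + S a) :=
        con_add_of_dvec a X hX (S a) (hS2 a)
      have h2 : dimConFull D (X + S a) ((X + S a) + ∑ w ∈ s, S w) :=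
        ih (X + S a) (fun u => by have := hX u; simp only [Pi.add_apply]; omega)
      have he3 : X + (S a + ∑ w ∈ s, S w) = (X + S a) + ∑ w ∈ s, S w := by
        rw [add_assoc]
      rw [he3]
      exact (dimConFull D).trans h1 h2
  refine ⟨∑ w, S w, fun u => ?_, fun v => ?_⟩
  · have h1 : (∑ w, S w) u = ∑ w, S w u := by
      rw [Finset.sum_apply]
    rw [h1]
    calc 1 ≤ S u u := hS1 u u
    _ ≤ ∑ w, S w u := Finset.single_le_sum (f := fun w => S w u)
      (fun w _ => Nat.zero_le _) (Finset.mem_univ u)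
  · have hsplit : ∑ w, S w = S v + ∑ w ∈ Finset.univ.erase v, S w :=
      (Finset.add_sum_erase _ S (Finset.mem_univ v)).symm
    rw [hsplit, ← add_assoc]
    have h1 := hS2 v
    have h2 : dimConFull D (dvec D v + S v)
        ((dvec D v + S v) + ∑ w ∈ Finset.univ.erase v, S w) :=
      haux _ _ (fun u => by
        have := hS1 v u
        simp only [Pi.add_apply]; omega)
    exact (dimConFull D).trans h1 h2

lemma con_key (hU : IsUDAF D) (hsc : StrongConn D) (he : Nonempty D.E)
    (l : List D.V) (Z W : D.V → ℕ) (hZ : ∀ u, 1 ≤ Z u) (hW : ∀ u, 1 ≤ W u)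
    (h : toInt W = toInt Z + (l.map (relRow D)).sum) : dimConFull D Z W := by
  obtain ⟨S₀, hS₀1, hS₀2⟩ := exists_S0 hU hsc he
  have honce : ∀ X : D.V → ℕ, (∀ u, 1 ≤ X u) → dimConFull D X (X + S₀) := fun X hX =>
    con_add_of_dvec (D.s (Classical.choice he)) X hX S₀ (hS₀2 _)
  have hiter : ∀ (m : ℕ) (X : D.V → ℕ), (∀ u, 1 ≤ X u) →
      dimConFull D X (X + m • S₀) := by
    intro m
    induction m with
    | zero => intro X hX; simpa using (dimConFull D).refl X
    | succ m ih =>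
      intro X hX
      have h1 := ih X hX
      have h2 := honce (X + m • S₀) (fun u => by
        have := hX u
        simp only [Pi.add_apply]; omega)
      have he3 : X + (m + 1) • S₀ = (X + m • S₀) + S₀ := by
        rw [succ_nsmul, add_assoc]
      rw [he3]
      exact (dimConFull D).trans h1 h2
  have h1 := hiter l.length Z hZ
  have hcoords : ∀ u, l.length + 0 ≤ (Z + l.length • S₀) u := by
    intro u
    have ha := hS₀1 u
    have hb := hZ u
    simp only [Pi.add_apply, Pi.smul_apply, smul_eq_mul]
    nlinarith
  obtain ⟨N, h2, h3, _⟩ := con_applyList l 0 (Z + l.length • S₀) hcoords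
  have hNW : N = W + l.length • S₀ := by
    funext u
    have ha := congrFun h3 u
    have hb := congrFun h u
    simp only [toInt, Pi.add_apply, Pi.smul_apply, smul_eq_mul] at ha hb ⊢
    push_cast at ha hb
    omega
  have h4 := hiter l.length W hW
  rw [hNW] at h2
  exact (dimConFull D).trans ((dimConFull D).trans h1 h2) ((dimConFull D).symm h4)

end Key

section Main
variable [Fintype D.V] [Fintype D.E]

lemma main12 {M₁ M₂ : D.V → ℕ} (h : dimConFull D M₁ M₂) :
    ∃ R₁ ∈ AddSubmonoid.closure (Set.range (relRow D)),
      ∃ R₂ ∈ AddSubmonoid.closure (Set.range (relRow D)),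
        toInt M₁ + R₁ = toInt M₂ + R₂ := by
  have h' : AddConGen.Rel (fun A B => ∃ v : D.V,
      A = (fun w => if w = v then 1 else 0) ∧ B = fun w => adjCount D v w) M₁ M₂ := h
  clear h
  induction h' with
  | of A B hab =>
    obtain ⟨v, rfl, rfl⟩ := hab
    refine ⟨relRow D v, AddSubmonoid.subset_closure ⟨v, rfl⟩, 0, zero_mem _, ?_⟩
    funext u
    simp only [toInt, Pi.add_apply, relRow, Pi.zero_apply]
    by_cases hh : u = v
    · subst hh; simp
    · simp only [if_neg hh, if_neg (fun hc : v = u => hh hc.symm)]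
      push_cast
      ring
  | refl M => exact ⟨0, zero_mem _, 0, zero_mem _, rfl⟩
  | symm _ ih =>
    obtain ⟨R₁, m1, R₂, m2, he⟩ := ih
    exact ⟨R₂, m2, R₁, m1, he.symm⟩
  | trans _ _ ih1 ih2 =>
    obtain ⟨R₁, m1, R₂, m2, e1⟩ := ih1
    obtain ⟨R₁', m1', R₂', m2', e2⟩ := ih2
    refine ⟨R₁ + R₁', add_mem m1 m1', R₂' + R₂, add_mem m2' m2, ?_⟩
    funext u
    have a1 := congrFun e1 u
    have a2 := congrFun e2 u
    simp only [toInt, Pi.add_apply] at a1 a2 ⊢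
    omega
  | add _ _ ih1 ih2 =>
    obtain ⟨R₁, m1, R₂, m2, e1⟩ := ih1
    obtain ⟨R₁', m1', R₂', m2', e2⟩ := ih2
    refine ⟨R₁ + R₁', add_mem m1 m1', R₂ + R₂', add_mem m2 m2', ?_⟩
    funext u
    have a1 := congrFun e1 u
    have a2 := congrFun e2 u
    simp only [toInt, Pi.add_apply] at a1 a2 ⊢
    push_cast
    omega

lemma main21 (hU : IsUDAF D) (hsc : StrongConn D) (he : Nonempty D.E)
    {M₁ M₂ : D.V → ℕ} (h₁ : M₁ ≠ 0) (h₂ : M₂ ≠ 0)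
    (R₁ : D.V → ℤ) (m1 : R₁ ∈ AddSubmonoid.closure (Set.range (relRow D)))
    (R₂ : D.V → ℤ) (m2 : R₂ ∈ AddSubmonoid.closure (Set.range (relRow D)))
    (heq : toInt M₁ + R₁ = toInt M₂ + R₂) : dimConFull D M₁ M₂ := by
  obtain ⟨l₁, hl₁⟩ := mem_refM_iff.mp m1
  obtain ⟨l₂, hl₂⟩ := mem_refM_iff.mp m2
  -- pump M₁
  obtain ⟨A₁, p1, p2, p3⟩ := con_pump hU hsc he M₁ h₁ (l₁.length + 1)
  obtain ⟨l₃, hl₃⟩ := mem_refM_iff.mp p3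
  -- apply l₁ to A₁
  obtain ⟨B₁, q1, q2, q3⟩ := con_applyList l₁ 1 A₁ (fun u => by have := p2 u; omega)
  -- pump M₂
  obtain ⟨A₂, r1, r2, r3⟩ := con_pump hU hsc he M₂ h₂ ((l₂ ++ l₃).length + 1)
  obtain ⟨l₄, hl₄⟩ := mem_refM_iff.mp r3
  -- apply l₂ ++ l₃ to A₂
  obtain ⟨B₂, s1, s2, s3⟩ := con_applyList (l₂ ++ l₃) 1 A₂ (fun u => by have := r2 u; omega)
  -- B₂ = B₁ + sum of l₄ rows
  have hfinal : toInt B₂ = toInt B₁ + ((l₄.map (relRow D)).sum) := by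
    funext u
    have a1 := congrFun q2 u
    have a2 := congrFun s2 u
    have a3 := congrFun hl₃ u
    have a4 := congrFun hl₄ u
    have a5 := congrFun heq u
    have a6 := congrFun hl₁ u
    have a7 := congrFun hl₂ u
    have a8 : ((l₂ ++ l₃).map (relRow D)).sum = (l₂.map (relRow D)).sum + (l₃.map (relRow D)).sum := by
      rw [List.map_append, List.sum_append]
    have a9 := congrFun a8 u
    simp only [toInt, Pi.add_apply, Pi.sub_apply] at a1 a2 a3 a4 a5 a6 a7 a9 ⊢
    omega
  have hkey := con_key hU hsc he l₄ B₁ B₂ q3 s3 hfinal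
  exact (dimConFull D).trans ((dimConFull D).trans p1 q1)
    ((dimConFull D).trans hkey ((dimConFull D).symm ((dimConFull D).trans r1 s1)))

lemma monoid_le_group {s : Set (D.V → ℤ)} {x : D.V → ℤ}
    (hx : x ∈ AddSubmonoid.closure s) : x ∈ AddSubgroup.closure s := by
  induction hx using AddSubmonoid.closure_induction with
  | mem y hy => exact AddSubgroup.subset_closure hy
  | zero => exact zero_mem _
  | add a b _ _ iha ihb => exact add_mem iha ihb

lemma group_decomp {s : Set (D.V → ℤ)} {x : D.V → ℤ}
    (hx : x ∈ AddSubgroup.closure s) :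
    ∃ a ∈ AddSubmonoid.closure s, ∃ b ∈ AddSubmonoid.closure s, x = a - b := by
  induction hx using AddSubgroup.closure_induction with
  | mem y hy => exact ⟨y, AddSubmonoid.subset_closure hy, 0, zero_mem _, by ring⟩
  | zero => exact ⟨0, zero_mem _, 0, zero_mem _, by ring⟩
  | add x y _ _ ihx ihy =>
    obtain ⟨a, ha, b, hb, rfl⟩ := ihx
    obtain ⟨c, hc, d, hd, rfl⟩ := ihy
    exact ⟨a + c, add_mem ha hc, b + d, add_mem hb hd, by ring⟩
  | neg x _ ih =>
    obtain ⟨a, ha, b, hb, rfl⟩ := ih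
    exact ⟨b, hb, a, ha, by ring⟩

end Main
end Test

/-- For nonzero multisets over the vertices of a strongly connected UDAF digraph
with an edge, the dimension congruence `∼_D`, the "common translate by the refining
monoid" relation, and membership of the difference in the subgroup generated by the
rows of the relator matrix, all coincide. -/
theorem stmt14 (D : Digraph') [Fintype D.V] [Fintype D.E]
    (hU : IsUDAF D) (hsc : StrongConn D) (he : Nonempty D.E)
    (M₁ M₂ : D.V → ℕ) (h₁ : M₁ ≠ 0) (h₂ : M₂ ≠ 0) :
    (dimConFull D M₁ M₂ ↔
      ∃ R₁ ∈ AddSubmonoid.closure (Set.range (relRow D)),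
        ∃ R₂ ∈ AddSubmonoid.closure (Set.range (relRow D)),
          toInt M₁ + R₁ = toInt M₂ + R₂) ∧
    (dimConFull D M₁ M₂ ↔
      toInt M₂ - toInt M₁ ∈ AddSubgroup.closure (Set.range (relRow D))) := by
  constructor
  · constructor
    · exact fun h => Test.main12 h
    · rintro ⟨R₁, m1, R₂, m2, heq⟩
      exact Test.main21 hU hsc he h₁ h₂ R₁ m1 R₂ m2 heq
  · constructor
    · intro h
      obtain ⟨R₁, m1, R₂, m2, heq⟩ := Test.main12 h
      have hdiff : toInt M₂ - toInt M₁ = R₁ - R₂ := by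
        funext u
        have h5 := congrFun heq u
        simp only [toInt, Pi.add_apply, Pi.sub_apply] at h5 ⊢
        omega
      rw [hdiff]
      exact sub_mem (Test.monoid_le_group m1) (Test.monoid_le_group m2)
    · intro h
      obtain ⟨a, ha, b, hb, hab⟩ := Test.group_decomp h
      refine Test.main21 hU hsc he h₁ h₂ a ha b hb ?_
      funext u
      have h5 := congrFun hab u
      simp only [toInt, Pi.add_apply, Pi.sub_apply] at h5 ⊢
      omega
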